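/- arXiv:2604.04912 — 5 statements merged into one kernel-verified Lean document; each statement's English description precedes it below -/
import Mathlib

section
/- In the graph G constructed by attaching to each vertex x of a base graph an 'independent set gadget' (as in the reduction from Independent Set: vertices x_v for v ∈ V(H), a vertex y_{uv} adjacent to x_u and x_v for each edge uv of H, a vertex α adjacent to all x_v, and a pendant p adjacent to α), the graph G is 2-degenerate: there exists an ordering of V(G) in which every vertex has at most 2 neighbors occurring later in the ordering. -/
/-- The graph of the Independent-Set reduction: vertices `x_v` (`Sum.inl (Sum.inl v)`),
`y_e` for edges `e` of `H` (`Sum.inl (Sum.inr e)`), `α = Sum.inr true`, `p = Sum.inr false`;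
`y_e` is adjacent to `x_u`, `x_v` for `e = uv`, `α` is adjacent to all `x_v` and to `p`. -/
def redGraph {V : Type*} (H : SimpleGraph V) :
    SimpleGraph ((V ⊕ H.edgeSet) ⊕ Bool) :=
  SimpleGraph.fromRel (fun a b =>
    match a, b with
    | Sum.inl (Sum.inr e), Sum.inl (Sum.inl v) => v ∈ (e : Sym2 V)
    | Sum.inr true, Sum.inl (Sum.inl _) => True
    | Sum.inr true, Sum.inr false => True
    | _, _ => False)

/-- The reduction graph is 2-degenerate: there is an ordering of the vertices in which
every vertex has at most 2 neighbors occurring later in the ordering. -/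
theorem stmt5 {V : Type*} [Fintype V] [DecidableEq V] (H : SimpleGraph V)
    [DecidableRel H.Adj] :
    ∃ f : ((V ⊕ H.edgeSet) ⊕ Bool) → ℕ, Function.Injective f ∧
      ∀ a, {b | (redGraph H).Adj a b ∧ f a < f b}.ncard ≤ 2 := by
  classical
  set nE := Fintype.card H.edgeSet with hnE
  set nV := Fintype.card V with hnV
  set eV := Fintype.equivFin V with heV
  set eE := Fintype.equivFin H.edgeSet with heE
  set f : ((V ⊕ H.edgeSet) ⊕ Bool) → ℕ :=
    Sum.elim (Sum.elim (fun v => nE + 1 + eV v) (fun e => (eE e : ℕ)))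
      (fun b => cond b (nE + 1 + nV) nE) with hf
  have hfx : ∀ v : V, f (Sum.inl (Sum.inl v)) = nE + 1 + eV v := fun v => rfl
  have hfy : ∀ e : H.edgeSet, f (Sum.inl (Sum.inr e)) = eE e := fun e => rfl
  have hfp : f (Sum.inr false) = nE := rfl
  have hfa : f (Sum.inr true) = nE + 1 + nV := rfl
  have hElt : ∀ e : H.edgeSet, (eE e : ℕ) < nE := fun e => (eE e).isLt
  have hVlt : ∀ v : V, (eV v : ℕ) < nV := fun v => (eV v).isLt
  refine ⟨f, ?_, ?_⟩
  · rintro (⟨v | e⟩ | b) (⟨w | e'⟩ | b') h <;>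
      simp only [hfx, hfy, hfp, hfa, hf, Sum.elim_inl, Sum.elim_inr] at h
    · have := eV.injective (Fin.val_injective (by omega : (eV v : ℕ) = eV w)); simp [this]
    · have := hElt e'; omega
    · cases b' <;> simp at h <;> [skip; skip] <;> omega
    · have := hElt e; omega
    · have := eE.injective (Fin.val_injective h); simp [this]
    · cases b' <;> simp at h <;> have := hElt e <;> omega
    · cases b <;> simp at h <;> omega
    · cases b <;> simp at h <;> have := hElt e' <;> omega
    · cases b <;> cases b' <;> first | rfl | (simp only [cond_true, cond_false] at h; omega)
  · rintro (⟨v | e⟩ | b)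
    · -- x_v : later neighbors ⊆ {α}
      have hsub : {b | (redGraph H).Adj (Sum.inl (Sum.inl v)) b ∧
          f (Sum.inl (Sum.inl v)) < f b} ⊆ {Sum.inr true} := by
        rintro (⟨w | e⟩ | b) ⟨hadj, hlt⟩
        · rw [redGraph, SimpleGraph.fromRel_adj] at hadj
          rcases hadj.2 with h | h <;> exact h.elim
        · rw [hfx, hfy] at hlt; have := hElt e; omega
        · cases b
          · rw [redGraph, SimpleGraph.fromRel_adj] at hadj
            rcases hadj.2 with h | h <;> exact h.elim
          · rfl
      calc _ ≤ ({Sum.inr true} : Set _).ncard :=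
              Set.ncard_le_ncard hsub (Set.finite_singleton _)
        _ ≤ 2 := by rw [Set.ncard_singleton]; omega
    · -- y_e : later neighbors ⊆ {x_u, x_w}
      obtain ⟨u, w, he⟩ : ∃ u w, (e : Sym2 V) = s(u, w) := by
        induction (e : Sym2 V) using Sym2.ind with
        | _ u w => exact ⟨u, w, rfl⟩
      have hsub : {b | (redGraph H).Adj (Sum.inl (Sum.inr e)) b ∧
          f (Sum.inl (Sum.inr e)) < f b} ⊆
          {Sum.inl (Sum.inl u), Sum.inl (Sum.inl w)} := by
        rintro (⟨x | e'⟩ | b) ⟨hadj, hlt⟩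
        · rw [redGraph, SimpleGraph.fromRel_adj] at hadj
          rcases hadj.2 with h | h
          · have hx : x ∈ (e : Sym2 V) := h
            rw [he, Sym2.mem_iff] at hx
            rcases hx with rfl | rfl
            · exact Or.inl rfl
            · exact Or.inr rfl
          · exact h.elim
        · rw [redGraph, SimpleGraph.fromRel_adj] at hadj
          rcases hadj.2 with h | h <;> exact h.elim
        · rw [redGraph, SimpleGraph.fromRel_adj] at hadj
          cases b <;> rcases hadj.2 with h | h <;> exact h.elim
      calc _ ≤ ({Sum.inl (Sum.inl u), Sum.inl (Sum.inl w)} : Set _).ncard :=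
              Set.ncard_le_ncard hsub ((Set.finite_singleton _).insert _)
        _ ≤ 2 := by
              refine le_trans (Set.ncard_insert_le _ _) ?_
              rw [Set.ncard_singleton]
    · -- α and p
      cases b
      · have hsub : {b | (redGraph H).Adj (Sum.inr false) b ∧
            f (Sum.inr false) < f b} ⊆ {Sum.inr true} := by
          rintro (⟨x | e'⟩ | c) ⟨hadj, hlt⟩ <;>
            rw [redGraph, SimpleGraph.fromRel_adj] at hadj
          · rcases hadj.2 with h | h <;> exact h.elim
          · rcases hadj.2 with h | h <;> exact h.elim
          · cases c
            · rcases hadj.2 with h | h <;> exact h.elim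
            · rfl
        calc _ ≤ ({Sum.inr true} : Set _).ncard :=
                Set.ncard_le_ncard hsub (Set.finite_singleton _)
          _ ≤ 2 := by rw [Set.ncard_singleton]; omega
      · have hsub : {b | (redGraph H).Adj (Sum.inr true) b ∧
            f (Sum.inr true) < f b} ⊆ (∅ : Set _) := by
          rintro (⟨x | e'⟩ | c) ⟨hadj, hlt⟩
          · rw [hfa, hfx] at hlt; have := hVlt x; omega
          · rw [hfa, hfy] at hlt; have := hElt e'; omega
          · cases c
            · rw [hfa, hfp] at hlt; omega
            · exact (redGraph H).loopless.irrefl _ hadj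
        rw [Set.subset_empty_iff] at hsub
        simp [hsub]
end

section
/- Let H be a graph and r ≥ 1, and let G be the graph of the Independent-Set reduction (vertices x_v for v ∈ V(H), y_{uv} adjacent to x_u, x_v for each edge uv, a vertex α adjacent to all x_v with quota ⟨r,r⟩, a pendant p adjacent to α with quota ⟨0,0⟩, all x_v and y_{uv} with quota ⟨0,1⟩). Then H has an independent set of size r if and only if G has a set S of size at most r with lo(v) ≤ |N[v] ∩ S| ≤ up(v) for all v ∈ V(G). -/
/-- Lower quotas: `lo(x_v) = lo(y_e) = 0`, `lo(α) = r`, `lo(p) = 0`. -/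
def loQ {V : Type*} (H : SimpleGraph V) (r : ℕ) : ((V ⊕ H.edgeSet) ⊕ Bool) → ℕ
  | Sum.inr true => r
  | _ => 0

/-- Upper quotas: `up(x_v) = up(y_e) = 1`, `up(α) = r`, `up(p) = 0`. -/
def upQ {V : Type*} (H : SimpleGraph V) (r : ℕ) : ((V ⊕ H.edgeSet) ⊕ Bool) → ℕ
  | Sum.inl _ => 1
  | Sum.inr true => r
  | Sum.inr false => 0

/-- `H` has an independent set of size `r` iff the reduction graph has a set `S` of size at
most `r` with `lo(v) ≤ |N[v] ∩ S| ≤ up(v)` for every vertex `v`. -/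
theorem stmt6 {V : Type*} [Fintype V] [DecidableEq V] (H : SimpleGraph V)
    [DecidableRel H.Adj] (r : ℕ) (hr : 1 ≤ r) :
    (∃ I : Set V, I.ncard = r ∧ ∀ u ∈ I, ∀ v ∈ I, ¬H.Adj u v) ↔
    (∃ S : Set ((V ⊕ H.edgeSet) ⊕ Bool), S.ncard ≤ r ∧
      ∀ a, loQ H r a ≤ ({b | b = a ∨ (redGraph H).Adj a b} ∩ S).ncard ∧
        ({b | b = a ∨ (redGraph H).Adj a b} ∩ S).ncard ≤ upQ H r a) := by
  classical
  have hxinj : Function.Injective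
      (fun v : V => (Sum.inl (Sum.inl v) : (V ⊕ H.edgeSet) ⊕ Bool)) := by
    intro a b h; simpa using h
  constructor
  · rintro ⟨I, hIcard, hInd⟩
    refine ⟨(fun v => Sum.inl (Sum.inl v)) '' I, ?_, ?_⟩
    · rw [Set.ncard_image_of_injective _ hxinj, hIcard]
    · rintro ((v | e) | b)
      · constructor
        · simp [loQ]
        · have hsub : {b | b = Sum.inl (Sum.inl v) ∨
              (redGraph H).Adj (Sum.inl (Sum.inl v)) b} ∩
              ((fun v => Sum.inl (Sum.inl v)) '' I) ⊆ {Sum.inl (Sum.inl v)} := by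
            rintro b ⟨hb1, w, hw, rfl⟩
            rcases hb1 with h | h
            · simp [h]
            · simp [redGraph, SimpleGraph.fromRel_adj] at h
          have := Set.ncard_le_ncard hsub (Set.finite_singleton _)
          simpa [upQ] using this
      · constructor
        · simp [loQ]
        · have : ({b | b = Sum.inl (Sum.inr e) ∨
              (redGraph H).Adj (Sum.inl (Sum.inr e)) b} ∩
              ((fun v => Sum.inl (Sum.inl v)) '' I)).ncard ≤ 1 := by
            rw [Set.ncard_le_one]
            rintro a ⟨ha1, w, hw, rfl⟩ b ⟨hb1, z, hz, rfl⟩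
            have hwe : w ∈ (e : Sym2 V) := by
              rcases ha1 with h | h
              · simp at h
              · simpa [redGraph, SimpleGraph.fromRel_adj] using h
            have hze : z ∈ (e : Sym2 V) := by
              rcases hb1 with h | h
              · simp at h
              · simpa [redGraph, SimpleGraph.fromRel_adj] using h
            by_contra hne
            have hwz : w ≠ z := by simpa using hne
            have : (e : Sym2 V) = s(w, z) :=
              ((Sym2.mem_and_mem_iff hwz).mp ⟨hwe, hze⟩)
            have hadj : H.Adj w z :=
              (H.mem_edgeSet).mp (this ▸ e.2)
            exact hInd w hw z hz hadj
          simpa [upQ] using this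
      · cases b
        · -- p
          have : {b | b = Sum.inr false ∨ (redGraph H).Adj (Sum.inr false) b} ∩
              ((fun v => Sum.inl (Sum.inl v)) '' I) = ∅ := by
            ext b
            simp only [Set.mem_inter_iff, Set.mem_setOf_eq, Set.mem_empty_iff_false,
              iff_false, not_and]
            rintro (h | h) ⟨w, hw, rfl⟩
            · simp at h
            · simp [redGraph, SimpleGraph.fromRel_adj] at h
          simp [this, loQ, upQ]
        · -- α
          have : {b | b = Sum.inr true ∨ (redGraph H).Adj (Sum.inr true) b} ∩
              ((fun v => Sum.inl (Sum.inl v)) '' I) =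
              ((fun v => Sum.inl (Sum.inl v)) '' I) := by
            apply Set.inter_eq_right.mpr
            rintro b ⟨w, hw, rfl⟩
            right
            simp [redGraph, SimpleGraph.fromRel_adj]
          rw [this, Set.ncard_image_of_injective _ hxinj, hIcard]
          exact ⟨le_rfl, le_rfl⟩
  · rintro ⟨S, hScard, hS⟩
    -- p's quota forces α ∉ S and p ∉ S
    have hp := (hS (Sum.inr false)).2
    have hpS : Sum.inr false ∉ S := by
      intro h
      have hmem : Sum.inr false ∈ {b | b = Sum.inr false ∨
          (redGraph H).Adj (Sum.inr false) b} ∩ S := ⟨Or.inl rfl, h⟩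
      have : 0 < ({b | b = Sum.inr false ∨
          (redGraph H).Adj (Sum.inr false) b} ∩ S).ncard :=
        (Set.ncard_pos (Set.toFinite _)).mpr ⟨_, hmem⟩
      simp [upQ] at hp
      omega
    have haS : Sum.inr true ∉ S := by
      intro h
      have hadj : (redGraph H).Adj (Sum.inr false) (Sum.inr true) := by
        simp [redGraph, SimpleGraph.fromRel_adj]
      have hmem : Sum.inr true ∈ {b | b = Sum.inr false ∨
          (redGraph H).Adj (Sum.inr false) b} ∩ S := ⟨Or.inr hadj, h⟩
      have : 0 < ({b | b = Sum.inr false ∨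
          (redGraph H).Adj (Sum.inr false) b} ∩ S).ncard :=
        (Set.ncard_pos (Set.toFinite _)).mpr ⟨_, hmem⟩
      simp [upQ] at hp
      omega
    -- α's quota: the neighborhood intersection equals S and has ncard exactly r
    have hα := hS (Sum.inr true)
    set NA := {b | b = Sum.inr true ∨ (redGraph H).Adj (Sum.inr true) b} ∩ S with hNA
    have hNAsub : NA ⊆ S := Set.inter_subset_right
    have h1 : r ≤ NA.ncard := by simpa [loQ] using hα.1
    have hNAcard : NA.ncard = r := le_antisymm (hα.2.trans_eq (by simp [upQ])) h1
    have hNAS : NA = S :=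
      Set.eq_of_subset_of_ncard_le hNAsub (by rw [hNAcard]; exact hScard)
        (Set.toFinite _)
    have hSx : ∀ b ∈ S, ∃ v : V, b = Sum.inl (Sum.inl v) := by
      intro b hb
      have : b ∈ NA := hNAS ▸ hb
      rcases this.1 with h | h
      · exact absurd (h ▸ hb) haS
      · rcases b with ((v | e) | c)
        · exact ⟨v, rfl⟩
        · exfalso; simp [redGraph, SimpleGraph.fromRel_adj] at h
        · exfalso
          cases c
          · exact hpS (‹(Sum.inr false : (V ⊕ H.edgeSet) ⊕ Bool) ∈ S›)
          · exact haS (‹(Sum.inr true : (V ⊕ H.edgeSet) ⊕ Bool) ∈ S›)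
    set I : Set V := {v | Sum.inl (Sum.inl v) ∈ S} with hI
    have hSI : S = (fun v => Sum.inl (Sum.inl v)) '' I := by
      ext b
      constructor
      · intro hb
        obtain ⟨v, rfl⟩ := hSx b hb
        exact ⟨v, hb, rfl⟩
      · rintro ⟨v, hv, rfl⟩; exact hv
    refine ⟨I, ?_, ?_⟩
    · have : S.ncard = I.ncard := by
        rw [hSI, Set.ncard_image_of_injective _ hxinj]
      have hrS : r ≤ S.ncard := by
        calc r ≤ NA.ncard := h1
          _ ≤ S.ncard := Set.ncard_le_ncard hNAsub (Set.toFinite _)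
      omega
    · intro u hu v hv hadj
      have hune : u ≠ v := H.ne_of_adj hadj
      set e : H.edgeSet := ⟨s(u, v), (H.mem_edgeSet).mpr hadj⟩ with he
      have hy := (hS (Sum.inl (Sum.inr e))).2
      have hsub : ({Sum.inl (Sum.inl u), Sum.inl (Sum.inl v)} :
          Set ((V ⊕ H.edgeSet) ⊕ Bool)) ⊆
          {b | b = Sum.inl (Sum.inr e) ∨
            (redGraph H).Adj (Sum.inl (Sum.inr e)) b} ∩ S := by
        rintro b (rfl | rfl)
        · exact ⟨Or.inr (by simp [redGraph, SimpleGraph.fromRel_adj, he]), hu⟩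
        · exact ⟨Or.inr (by simp [redGraph, SimpleGraph.fromRel_adj, he]), hv⟩
      have h2 : 2 ≤ ({b | b = Sum.inl (Sum.inr e) ∨
          (redGraph H).Adj (Sum.inl (Sum.inr e)) b} ∩ S).ncard := by
        have := Set.ncard_le_ncard hsub (Set.toFinite _)
        rwa [Set.ncard_pair (by simpa using hune)] at this
      change _ ≤ 1 at hy
      omega
end

section
/- If a vertex w in a graph G has at least k+1 pendant neighbors, each with lower and upper quota equal to 1, then every set S of size at most k that properly dominates G contains w and contains none of these pendants. -/
/-- If a vertex `w` has at least `k+1` pendant neighbors (degree-1 vertices whose unique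
neighbor is `w`), each with lower and upper quota equal to 1, then every set `S` of size at
most `k` that properly quota-dominates `G` contains `w` and contains none of these pendants. -/
theorem stmt8 {V : Type*} [Fintype V] (G : SimpleGraph V) (lo up : V → ℕ) (k : ℕ)
    (w : V) (P : Set V) (hP : k + 1 ≤ P.ncard)
    (hpend : ∀ p ∈ P, G.Adj w p ∧ (∀ u, G.Adj p u → u = w) ∧ lo p = 1 ∧ up p = 1)
    (S : Set V) (hS : S.ncard ≤ k)
    (hdom : ∀ v : V, lo v ≤ ({u | u = v ∨ G.Adj v u} ∩ S).ncard ∧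
      ({u | u = v ∨ G.Adj v u} ∩ S).ncard ≤ up v) :
    w ∈ S ∧ ∀ p ∈ P, p ∉ S := by
  have hnbhd : ∀ p ∈ P, {u | u = p ∨ G.Adj p u} = {p, w} := by
    intro p hp
    obtain ⟨hadj, huniq, _, _⟩ := hpend p hp
    ext u
    simp only [Set.mem_setOf_eq, Set.mem_insert_iff, Set.mem_singleton_iff]
    constructor
    · rintro (rfl | h)
      · exact Or.inl rfl
      · exact Or.inr (huniq u h)
    · rintro (rfl | rfl)
      · exact Or.inl rfl
      · exact Or.inr hadj.symm
  have hne : ∀ p ∈ P, p ≠ w := fun p hp => (hpend p hp).1.ne'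
  have hw : w ∈ S := by
    by_contra hw
    have hsub : P ⊆ S := by
      intro p hp
      have h1 := (hdom p).1
      rw [hnbhd p hp, (hpend p hp).2.2.1] at h1
      have : ({p, w} ∩ S : Set V).Nonempty := by
        rw [← Set.ncard_pos (Set.toFinite _)]; omega
      obtain ⟨x, hx⟩ := this
      rcases hx.1 with rfl | rfl
      · exact hx.2
      · exact absurd hx.2 hw
    have := Set.ncard_le_ncard hsub (Set.toFinite S)
    omega
  refine ⟨hw, fun p hp hpS => ?_⟩
  have h2 := (hdom p).2
  rw [hnbhd p hp, (hpend p hp).2.2.2] at h2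
  have hsub : ({p, w} : Set V) ⊆ {p, w} ∩ S := by
    intro x hx
    rcases hx with rfl | rfl
    · exact ⟨Or.inl rfl, hpS⟩
    · exact ⟨Or.inr rfl, hw⟩
  have := Set.ncard_le_ncard hsub (Set.toFinite _)
  rw [Set.ncard_pair (hne p hp)] at this
  omega
end

section
/- Let G be a graph with quota functions lo, up, and let v be a vertex such that every vertex at distance at most 2 from v (including v itself) has lower quota 0. Then G has a properly quota-dominating set of size at most k if and only if G − v (with quotas restricted to V(G)\{v}) has one. -/
/-- Reduction rule: if every vertex at distance at most 2 from `v` (including `v`) has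
lower quota 0, then `G` has a properly quota-dominating set of size at most `k` iff
`G - v` (with restricted quotas) has one. -/
theorem stmt10 {V : Type*} [Fintype V] [DecidableEq V] (G : SimpleGraph V)
    (lo up : V → ℕ) (k : ℕ) (v : V)
    (hv : ∀ w : V, (w = v ∨ G.Adj v w ∨ ∃ u, G.Adj v u ∧ G.Adj u w) → lo w = 0) :
    (∃ S : Set V, S.ncard ≤ k ∧
      ∀ w : V, lo w ≤ ({u | u = w ∨ G.Adj w u} ∩ S).ncard ∧
        ({u | u = w ∨ G.Adj w u} ∩ S).ncard ≤ up w) ↔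
    (∃ S : Set ↥{u : V | u ≠ v}, S.ncard ≤ k ∧
      ∀ w : ↥{u : V | u ≠ v},
        lo w.val ≤ ({u | u = w ∨ (G.induce {u : V | u ≠ v}).Adj w u} ∩ S).ncard ∧
        ({u | u = w ∨ (G.induce {u : V | u ≠ v}).Adj w u} ∩ S).ncard ≤ up w.val) := by
  constructor
  · rintro ⟨S, hSk, hS⟩
    refine ⟨{x | x.val ∈ S}, ?_, ?_⟩
    · calc Set.ncard {x : ↥{u : V | u ≠ v} | x.val ∈ S}
          = (Subtype.val '' {x : ↥{u : V | u ≠ v} | x.val ∈ S}).ncard :=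
            (Set.ncard_image_of_injective _ Subtype.val_injective).symm
        _ ≤ S.ncard := Set.ncard_le_ncard
            (by rintro u ⟨x, hx, rfl⟩; exact hx) (Set.toFinite S)
        _ ≤ k := hSk
    · intro w
      have himg : Subtype.val ''
          ({u | u = w ∨ (G.induce {u : V | u ≠ v}).Adj w u} ∩ {x | x.val ∈ S})
          = {u | u = w.val ∨ G.Adj w.val u} ∩ (S \ {v}) := by
        ext u
        constructor
        · rintro ⟨x, ⟨h1, h2⟩, rfl⟩
          refine ⟨?_, h2, x.2⟩
          rcases h1 with rfl | h
          · exact Or.inl rfl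
          · exact Or.inr h
        · rintro ⟨h1, h2, h3⟩
          have h3' : u ∈ {u : V | u ≠ v} := h3
          refine ⟨⟨u, h3'⟩, ⟨?_, h2⟩, rfl⟩
          rcases h1 with h | h
          · exact Or.inl (Subtype.ext h)
          · exact Or.inr h
      have hcard : ({u | u = w ∨ (G.induce {u : V | u ≠ v}).Adj w u} ∩
            {x : ↥{u : V | u ≠ v} | x.val ∈ S}).ncard
          = ({u | u = w.val ∨ G.Adj w.val u} ∩ (S \ {v})).ncard := by
        rw [← himg, Set.ncard_image_of_injective _ Subtype.val_injective]
      rw [hcard]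
      constructor
      · by_cases hadj : G.Adj v w.val
        · rw [hv w.val (Or.inr (Or.inl hadj))]; exact Nat.zero_le _
        · have heq : {u | u = w.val ∨ G.Adj w.val u} ∩ (S \ {v})
              = {u | u = w.val ∨ G.Adj w.val u} ∩ S := by
            ext u
            constructor
            · rintro ⟨h1, h2, _⟩; exact ⟨h1, h2⟩
            · rintro ⟨h1, h2⟩
              refine ⟨h1, h2, ?_⟩
              rintro rfl
              rcases h1 with h | h
              · exact w.2 h.symm
              · exact hadj h.symm
          rw [heq]; exact (hS w.val).1
      · calc ({u | u = w.val ∨ G.Adj w.val u} ∩ (S \ {v})).ncard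
            ≤ ({u | u = w.val ∨ G.Adj w.val u} ∩ S).ncard :=
              Set.ncard_le_ncard (by rintro u ⟨h1, h2, _⟩; exact ⟨h1, h2⟩) (Set.toFinite _)
          _ ≤ up w.val := (hS w.val).2
  · rintro ⟨S', hSk, hS'⟩
    set T : Set V := (Subtype.val '' S') \ {u | u = v ∨ G.Adj v u} with hT
    have hTsub : T ⊆ Subtype.val '' S' := Set.diff_subset
    refine ⟨T, ?_, ?_⟩
    · calc T.ncard ≤ (Subtype.val '' S').ncard :=
            Set.ncard_le_ncard hTsub (Set.toFinite _)
        _ = S'.ncard := Set.ncard_image_of_injective _ Subtype.val_injective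
        _ ≤ k := hSk
    · intro w
      by_cases hwv : w = v
      · subst hwv
        have hempty : {u | u = w ∨ G.Adj w u} ∩ T = ∅ := by
          ext u
          simp only [Set.mem_inter_iff, Set.mem_empty_iff_false, iff_false]
          rintro ⟨h1, _, h2⟩
          apply h2
          rcases h1 with rfl | h
          · exact Or.inl rfl
          · exact Or.inr h
        rw [hempty, Set.ncard_empty]
        exact ⟨by rw [hv w (Or.inl rfl)], Nat.zero_le _⟩
      · have hw' : w ∈ {u : V | u ≠ v} := hwv
        have himg : Subtype.val ''
            ({u | u = ⟨w, hw'⟩ ∨ (G.induce {u : V | u ≠ v}).Adj ⟨w, hw'⟩ u} ∩ S')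
            = {u | u = w ∨ G.Adj w u} ∩ (Subtype.val '' S') := by
          ext u
          constructor
          · rintro ⟨x, ⟨h1, h2⟩, rfl⟩
            refine ⟨?_, x, h2, rfl⟩
            rcases h1 with rfl | h
            · exact Or.inl rfl
            · exact Or.inr h
          · rintro ⟨h1, x, h2, rfl⟩
            refine ⟨x, ⟨?_, h2⟩, rfl⟩
            rcases h1 with h | h
            · exact Or.inl (Subtype.ext h)
            · exact Or.inr h
        have hcard : ({u | u = ⟨w, hw'⟩ ∨ (G.induce {u : V | u ≠ v}).Adj ⟨w, hw'⟩ u} ∩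
              S').ncard = ({u | u = w ∨ G.Adj w u} ∩ (Subtype.val '' S')).ncard := by
          rw [← himg, Set.ncard_image_of_injective _ Subtype.val_injective]
        constructor
        · by_cases h0 : lo w = 0
          · rw [h0]; exact Nat.zero_le _
          · have heq : {u | u = w ∨ G.Adj w u} ∩ T
                = {u | u = w ∨ G.Adj w u} ∩ (Subtype.val '' S') := by
              ext u
              constructor
              · rintro ⟨h1, h2, _⟩; exact ⟨h1, h2⟩
              · rintro ⟨h1, h2⟩
                refine ⟨h1, h2, ?_⟩
                rintro (rfl | hadj)
                · obtain ⟨x, _, hx⟩ := h2; exact x.2 hx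
                · rcases h1 with rfl | h
                  · exact h0 (hv u (Or.inr (Or.inl hadj)))
                  · exact h0 (hv w (Or.inr (Or.inr ⟨u, hadj, h.symm⟩)))
            rw [heq, ← hcard]
            exact (hS' ⟨w, hw'⟩).1
        · calc ({u | u = w ∨ G.Adj w u} ∩ T).ncard
              ≤ ({u | u = w ∨ G.Adj w u} ∩ (Subtype.val '' S')).ncard :=
                Set.ncard_le_ncard (Set.inter_subset_inter_right _ hTsub) (Set.toFinite _)
            _ ≤ up w := by rw [← hcard]; exact (hS' ⟨w, hw'⟩).2
end

section
/- If three vertices p1, p2, p3 lie (in that order) along an induced path of a graph G such that p2 separates p1 from p3 (every path from p1 to p3 passes through p2), then in any minor model ψ of a complete graph in G, p1, p2, p3 cannot belong to three pairwise distinct branch sets. -/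
/-- If `p2` separates `p1` from `p3` (every walk from `p1` to `p3` passes through `p2`),
then in any minor model `ψ` of a complete graph in `G` (pairwise disjoint connected branch
sets, every two of which are joined by an edge), the vertices `p1, p2, p3` cannot lie in
three pairwise distinct branch sets. -/
theorem stmt15 {V : Type*} {ι : Type*} (G : SimpleGraph V) (ψ : ι → Set V)
    (hdisj : ∀ i j : ι, i ≠ j → Disjoint (ψ i) (ψ j))
    (hconn : ∀ i, (G.induce (ψ i)).Connected)
    (hadj : ∀ i j : ι, i ≠ j → ∃ a ∈ ψ i, ∃ b ∈ ψ j, G.Adj a b)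
    (p1 p2 p3 : V) (h12 : p1 ≠ p2) (h23 : p2 ≠ p3) (h13 : p1 ≠ p3)
    (hsep : ∀ w : G.Walk p1 p3, p2 ∈ w.support) :
    ¬∃ q1 q2 q3 : ι, q1 ≠ q2 ∧ q2 ≠ q3 ∧ q1 ≠ q3 ∧
      p1 ∈ ψ q1 ∧ p2 ∈ ψ q2 ∧ p3 ∈ ψ q3 := by
  rintro ⟨q1, q2, q3, hq12, hq23, hq13, hp1, hp2, hp3⟩
  obtain ⟨a, ha, b, hb, hab⟩ := hadj q1 q3 hq13
  obtain ⟨w1⟩ := (hconn q1) ⟨p1, hp1⟩ ⟨a, ha⟩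
  obtain ⟨w3⟩ := (hconn q3) ⟨b, hb⟩ ⟨p3, hp3⟩
  let W : G.Walk p1 p3 :=
    (w1.map (SimpleGraph.Embedding.induce (ψ q1)).toHom).append
      (SimpleGraph.Walk.cons hab (w3.map (SimpleGraph.Embedding.induce (ψ q3)).toHom))
  have hmem := hsep W
  replace hmem := (SimpleGraph.Walk.mem_support_append_iff _ _).mp hmem
  have h21 : p2 ∉ ψ q1 := fun h =>
    (hdisj q1 q2 hq12).ne_of_mem h hp2 rfl
  have h23' : p2 ∉ ψ q3 := fun h =>
    (hdisj q2 q3 hq23).ne_of_mem hp2 h rfl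
  rcases hmem with hmem | hmem
  · replace hmem := List.mem_map.mp (Eq.mp (congrArg (p2 ∈ ·) (SimpleGraph.Walk.support_map _ _)) hmem)
    obtain ⟨x, -, hx⟩ := hmem
    exact h21 (hx ▸ x.2)
  · replace hmem := List.mem_cons.mp (Eq.mp (congrArg (p2 ∈ ·) (SimpleGraph.Walk.support_cons _ _)) hmem)
    rcases hmem with hmem | hmem
    · exact h21 (hmem ▸ ha)
    · replace hmem := List.mem_map.mp (Eq.mp (congrArg (p2 ∈ ·) (SimpleGraph.Walk.support_map _ _)) hmem)
      obtain ⟨x, -, hx⟩ := hmem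
      exact h23' (hx ▸ x.2)
end
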